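/- Spot prices only increase with reservations: For any equilibrium of the dual spot+reservation mechanism and any realized supply q, the dual-market spot price satisfies p_s^{s+r}(q) ≥ p_s^{s}(q), where p_s^{s}(q) is the clearing price of the spot-only mechanism with the same value distribution and supply. -/
import Mathlib

/-- Spot prices only increase with reservations.  `F` is the value CDF, so `1 − F p` is
the mass of bidders with value above `p`; `R p` is the mass of reserving bidders with
value at most `p` (so `0 ≤ R p ≤ T`, where `T` is the total reserved mass), and `q` is
the realized supply.  The spot-only clearing price is
`p_s^s(q) = inf {p | 1 − F p ≤ q}`, while the dual-market residual clearing price is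
`p_s^{s+r}(q) = inf {p | (1 − F p) − (T − R p) ≤ q − T}` (non-reserving demand above
`p` at most the residual supply).  Then `p_s^{s+r}(q) ≥ p_s^s(q)`. -/
theorem dual_spot_price_ge_spot_only (F R : ℝ → ℝ) (T q : ℝ)
    (hR0 : ∀ p, 0 ≤ R p) (hRT : ∀ p, R p ≤ T)
    (hbdd : BddBelow {p : ℝ | 1 - F p ≤ q})
    (hne : {p : ℝ | (1 - F p) - (T - R p) ≤ q - T}.Nonempty) :
    sInf {p : ℝ | 1 - F p ≤ q} ≤ sInf {p : ℝ | (1 - F p) - (T - R p) ≤ q - T} := by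
  apply csInf_le_csInf hbdd hne
  intro p hp
  simp only [Set.mem_setOf_eq] at hp ⊢
  have := hR0 p
  linarith
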